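/- For all real numbers R and δ with 0 < δ ≤ R·e^{-1/2}, one has ∫₀^δ √(log(R/ε)) dε ≤ 2δ·√(log(R/δ)). -/

import Mathlib

open MeasureTheory Real

/-- Entropy integral bound: for `0 < δ ≤ R e^{-1/2}`,
`∫₀^δ √(log(R/ε)) dε ≤ 2δ√(log(R/δ))`. -/
theorem entropy_integral_bound (R δ : ℝ) (hδ : 0 < δ)
    (hδR : δ ≤ R * Real.exp (-(1 / 2))) :
    ∫ ε in (0 : ℝ)..δ, Real.sqrt (Real.log (R / ε)) ≤
      2 * δ * Real.sqrt (Real.log (R / δ)) := by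
  have hepos := Real.exp_pos (-(1/2 : ℝ))
  have hR : 0 < R := by
    rcases mul_pos_iff.1 (lt_of_lt_of_le hδ hδR) with h | h
    · exact h.1
    · linarith [h.2, hepos]
  have he : Real.exp (-(1/2:ℝ)) * Real.exp (1/2:ℝ) = 1 := by
    rw [← Real.exp_add]; norm_num
  have hL : (1:ℝ)/2 ≤ Real.log (R / δ) := by
    have h2 : Real.exp (1/2:ℝ) ≤ R / δ := by
      rw [le_div_iff₀ hδ]
      nlinarith [Real.exp_pos (1/2:ℝ)]
    calc (1:ℝ)/2 = Real.log (Real.exp (1/2:ℝ)) := (Real.log_exp _).symm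
      _ ≤ Real.log (R / δ) := Real.log_le_log (Real.exp_pos _) h2
  set L : ℝ := Real.log (R / δ) with hLdef
  set s : ℝ := Real.sqrt L with hsdef
  have hs : 0 < s := Real.sqrt_pos.2 (by linarith)
  have hs2 : s ^ 2 = L := Real.sq_sqrt (by linarith)
  set f : ℝ → ℝ := fun x => Real.sqrt (Real.log (R / x)) with hfdef
  set g : ℝ → ℝ := fun x => s + (Real.log δ - Real.log x) / (2 * s) with hgdef
  -- key pointwise bound f ≤ g on (0, δ]
  have key : ∀ x : ℝ, 0 < x → x ≤ δ → f x ≤ g x := by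
    intro x hx hxδ
    have hu : 0 ≤ Real.log δ - Real.log x :=
      sub_nonneg.2 (Real.log_le_log hx hxδ)
    set u : ℝ := Real.log δ - Real.log x with hudef
    have hlog : Real.log (R / x) = L + u := by
      rw [hLdef, hudef, Real.log_div hR.ne' hx.ne', Real.log_div hR.ne' hδ.ne']
      ring
    have hv : u / (2 * s) * (2 * s) = u := div_mul_cancel₀ _ (by positivity)
    have hle : L + u ≤ (s + u / (2 * s)) ^ 2 := by
      nlinarith [sq_nonneg (u / (2 * s)), hs2, hv, hs]
    calc f x = Real.sqrt (L + u) := by rw [hfdef]; simp only [hlog]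
      _ ≤ Real.sqrt ((s + u / (2 * s)) ^ 2) := Real.sqrt_le_sqrt hle
      _ = s + u / (2 * s) := Real.sqrt_sq (by positivity)
      _ = g x := rfl
  -- log comparison: for 0 < x ≤ δ, log δ - log x ≤ 2√δ * x^(-1/2)
  have logbd : ∀ x : ℝ, 0 < x → x ≤ δ →
      Real.log δ - Real.log x ≤ 2 * Real.sqrt δ * x ^ (-(1/2) : ℝ) := by
    intro x hx hxδ
    have hdx : 0 < δ / x := div_pos hδ hx
    have h1 : Real.log (Real.sqrt (δ / x)) ≤ Real.sqrt (δ / x) - 1 :=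
      Real.log_le_sub_one_of_pos (Real.sqrt_pos.2 hdx)
    rw [Real.log_sqrt hdx.le] at h1
    have h2 : Real.log (δ / x) ≤ 2 * Real.sqrt (δ / x) := by linarith
    have h3 : Real.sqrt (δ / x) = Real.sqrt δ * x ^ (-(1/2) : ℝ) := by
      rw [Real.sqrt_div hδ.le, Real.rpow_neg hx.le, ← Real.sqrt_eq_rpow, div_eq_mul_inv]
    rw [← Real.log_div hδ.ne' hx.ne']
    calc Real.log (δ / x) ≤ 2 * Real.sqrt (δ / x) := h2
      _ = 2 * Real.sqrt δ * x ^ (-(1/2) : ℝ) := by rw [h3]; ring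
  -- dominating integrable function
  set h : ℝ → ℝ := fun x => s + 2 * Real.sqrt δ * x ^ (-(1/2) : ℝ) / (2 * s) with hhdef
  have hint_h : IntervalIntegrable h volume 0 δ := by
    apply IntervalIntegrable.add intervalIntegrable_const
    exact ((intervalIntegral.intervalIntegrable_rpow' (by norm_num)).const_mul _).div_const _
  have hΙ : Set.uIoc (0:ℝ) δ = Set.Ioc 0 δ := Set.uIoc_of_le hδ.le
  have hg_nonneg : ∀ x : ℝ, 0 < x → x ≤ δ → 0 ≤ g x := by
    intro x hx hxδ
    have hu : 0 ≤ Real.log δ - Real.log x := sub_nonneg.2 (Real.log_le_log hx hxδ)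
    have : 0 ≤ (Real.log δ - Real.log x) / (2 * s) := by positivity
    simp only [hgdef]; linarith
  have hgh : ∀ x : ℝ, 0 < x → x ≤ δ → g x ≤ h x := by
    intro x hx hxδ
    simp only [hgdef, hhdef]
    have := logbd x hx hxδ
    have h2s : (0:ℝ) < 2 * s := by positivity
    gcongr
  have hint_g : IntervalIntegrable g volume 0 δ := by
    apply hint_h.mono_fun'
    · exact (((measurable_const.sub Real.measurable_log).div_const _).const_add
        s).aestronglyMeasurable
    · rw [hΙ]
      filter_upwards [ae_restrict_mem measurableSet_Ioc] with x hx
      rw [Real.norm_eq_abs, abs_of_nonneg (hg_nonneg x hx.1 hx.2)]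
      exact hgh x hx.1 hx.2
  have hf_meas : Measurable f :=
    (Real.measurable_log.comp (measurable_const.div measurable_id)).sqrt
  have hint_f : IntervalIntegrable f volume 0 δ := by
    apply hint_h.mono_fun' hf_meas.aestronglyMeasurable
    rw [hΙ]
    filter_upwards [ae_restrict_mem measurableSet_Ioc] with x hx
    rw [Real.norm_eq_abs, abs_of_nonneg (Real.sqrt_nonneg _)]
    exact (key x hx.1 hx.2).trans (hgh x hx.1 hx.2)
  -- step 1: compare integrals
  have step1 : (∫ x in (0:ℝ)..δ, f x) ≤ ∫ x in (0:ℝ)..δ, g x := by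
    apply intervalIntegral.integral_mono_ae_restrict hδ.le hint_f hint_g
    have h0 : ∀ᵐ x : ℝ, x ≠ 0 := by
      rw [ae_iff]
      have : {x : ℝ | ¬ x ≠ 0} = {0} := by ext x; simp
      rw [this]
      exact Real.volume_singleton
    filter_upwards [ae_restrict_of_ae h0, ae_restrict_mem measurableSet_Icc] with x hx0 hx
    exact key x (lt_of_le_of_ne hx.1 (Ne.symm hx0)) hx.2
  -- step 2: compute ∫ g by FTC with antiderivative G
  set G : ℝ → ℝ := fun x => s * x + (x * Real.log δ - (x * Real.log x - x)) / (2 * s)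
    with hGdef
  have step2 : (∫ x in (0:ℝ)..δ, g x) = δ * s + δ / (2 * s) := by
    have hcont : ContinuousOn G (Set.Icc 0 δ) := by
      apply Continuous.continuousOn
      have : Continuous fun x : ℝ => x * Real.log x := Real.continuous_mul_log
      fun_prop
    have hderiv : ∀ x ∈ Set.Ioo (0:ℝ) δ, HasDerivWithinAt G (g x) (Set.Ioi x) x := by
      intro x hx
      have hd : HasDerivAt G (g x) x := by
        have h1 : HasDerivAt (fun y : ℝ => y * Real.log y) (Real.log x + 1) x :=
          Real.hasDerivAt_mul_log hx.1.ne'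
        have h2 : HasDerivAt (fun y : ℝ => s * y) s x := by
          simpa using (hasDerivAt_id x).const_mul s
        have h3 : HasDerivAt (fun y : ℝ => y * Real.log δ) (Real.log δ) x := by
          simpa using (hasDerivAt_id x).mul_const (Real.log δ)
        have h4 : HasDerivAt (fun y : ℝ => y * Real.log y - y) (Real.log x) x := by
          exact (h1.sub (hasDerivAt_id' x)).congr_deriv (by ring)
        have := h2.add (((h3.sub h4)).div_const (2 * s))
        exact this
        try simp only [hgdef]
        try ring
      exact hd.hasDerivWithinAt
    have := intervalIntegral.integral_eq_sub_of_hasDeriv_right_of_le hδ.le hcont hderiv hint_g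
    rw [this, hGdef]
    simp [Real.log_zero, mul_comm]
  -- step 3: conclude
  have step3 : δ * s + δ / (2 * s) ≤ 2 * δ * s := by
    have h1 : δ / (2 * s) ≤ δ * s := by
      rw [div_le_iff₀ (by positivity)]
      nlinarith [hs2, hL, hδ]
    linarith
  calc (∫ x in (0:ℝ)..δ, f x) ≤ ∫ x in (0:ℝ)..δ, g x := step1
    _ = δ * s + δ / (2 * s) := step2
    _ ≤ 2 * δ * s := step3
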